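/- Let R̄ be a quotient of k[X₁,…,Xₙ] by a surjection φ, where k has characteristic p, and let γ_{ε,φ,b}(w) = inf { u + ε p^{-u} v_{φ,b}(w_u) : u ∈ ℕ } on Witt vectors w = (w_u) ∈ W(R̄). Let w ∈ W(R̄) be overconvergent (i.e. γ_{ε₀,φ,b}(w) ≠ −∞ for some ε₀ > 0) with w_0 = 0, and let E < 1 be a real number. Then there exists δ > 0 such that for all ε ∈ (0, δ], γ_{ε,φ,b}(w) ≥ E. -/
import Mathlib


open WittVector

/-- The weighted-degree pseudovaluation on a polynomial ring:
`v_b(P) = min { −Σᵢ bᵢ jᵢ : the coefficient of X^j in P is nonzero }`, with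
`v_b(0) = +∞`. -/
noncomputable def weightedVal {n : ℕ} {k : Type*} [CommRing k] (b : Fin n → ℝ)
    (P : MvPolynomial (Fin n) k) : EReal :=
  sInf ((fun j : Fin n →₀ ℕ => ((-(∑ i, b i * (j i : ℝ)) : ℝ) : EReal)) ''
    (P.support : Set (Fin n →₀ ℕ)))

/-- The pseudovaluation on a quotient `R̄` of the polynomial ring, defined by taking the
supremum of `v_b` over all preimages. -/
noncomputable def weightedValQuot {n : ℕ} {k R : Type*} [CommRing k] [CommRing R]
    (φ : MvPolynomial (Fin n) k →+* R) (b : Fin n → ℝ) (r : R) : EReal :=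
  sSup (weightedVal b '' (φ ⁻¹' {r}))

/-- The Davis–Langer–Zink Gauss norm on Witt vectors over `R̄`:
`γ_{ε,φ,b}(w) = inf { u + ε p^{-u} v_{φ,b}(w_u) : u ∈ ℕ }`. -/
noncomputable def gaussNorm (p : ℕ) [Fact p.Prime] {n : ℕ} {k R : Type*} [CommRing k]
    [CommRing R] (φ : MvPolynomial (Fin n) k →+* R) (b : Fin n → ℝ) (ε : ℝ)
    (w : WittVector p R) : EReal :=
  ⨅ u : ℕ, ((u : EReal) + ((ε * ((p : ℝ)⁻¹) ^ u : ℝ) : EReal) *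
    weightedValQuot φ b (w.coeff u))

lemma weightedVal_ne_bot {n : ℕ} {k : Type*} [CommRing k] (b : Fin n → ℝ)
    (P : MvPolynomial (Fin n) k) : weightedVal b P ≠ ⊥ := by
  unfold weightedVal
  set S := ((fun j : Fin n →₀ ℕ => ((-(∑ i, b i * (j i : ℝ)) : ℝ) : EReal)) ''
    (P.support : Set (Fin n →₀ ℕ))) with hS
  rcases S.eq_empty_or_nonempty with h | h
  · rw [h, sInf_empty]; exact top_ne_bot
  · have hfin : S.Finite := Set.Finite.image _ (P.support.finite_toSet)
    have := h.csInf_mem hfin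
    rw [hS] at this
    obtain ⟨j, _, hj⟩ := this
    rw [hS, ← hj]
    exact EReal.coe_ne_bot _

lemma weightedValQuot_ne_bot {n : ℕ} {k R : Type*} [CommRing k] [CommRing R]
    (φ : MvPolynomial (Fin n) k →+* R) (hφ : Function.Surjective φ) (b : Fin n → ℝ)
    (r : R) : weightedValQuot φ b r ≠ ⊥ := by
  obtain ⟨P, hP⟩ := hφ r
  have hmem : weightedVal b P ∈ weightedVal b '' (φ ⁻¹' {r}) :=
    ⟨P, by simp [hP], rfl⟩
  have h1 : weightedVal b P ≤ weightedValQuot φ b r := le_sSup hmem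
  intro h
  exact weightedVal_ne_bot b P (le_bot_iff.mp (h ▸ h1))

lemma weightedValQuot_zero {n : ℕ} {k R : Type*} [CommRing k] [CommRing R]
    (φ : MvPolynomial (Fin n) k →+* R) (b : Fin n → ℝ) :
    weightedValQuot φ b 0 = ⊤ := by
  have hmem : weightedVal b (0 : MvPolynomial (Fin n) k) ∈
      weightedVal b '' (φ ⁻¹' {(0 : R)}) := ⟨0, by simp, rfl⟩
  have h0 : weightedVal b (0 : MvPolynomial (Fin n) k) = ⊤ := by
    unfold weightedVal
    simp [sInf_empty]
  rw [h0] at hmem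
  exact top_le_iff.mp (le_sSup hmem)

/-- if `w ∈ W(R̄)` is overconvergent (i.e. `γ_{ε₀,φ,b}(w) ≠ −∞` for some
`ε₀ > 0`) and `w₀ = 0`, then for every real `E < 1` there is `δ > 0` such that for all
`ε ∈ (0, δ]`, `γ_{ε,φ,b}(w) ≥ E`. -/
theorem gaussNorm_lowerbound_of_verschiebung (p : ℕ) [Fact p.Prime] {n : ℕ}
    (k R : Type*) [CommRing k] [CommRing R] [CharP k p] [CharP R p]
    (φ : MvPolynomial (Fin n) k →+* R) (hφ : Function.Surjective φ)
    (b : Fin n → ℝ) (hb : ∀ i, 0 < b i)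
    (w : WittVector p R) (hw0 : w.coeff 0 = 0)
    (hover : ∃ ε₀ : ℝ, 0 < ε₀ ∧ gaussNorm p φ b ε₀ w ≠ ⊥)
    (E : ℝ) (hE : E < 1) :
    ∃ δ : ℝ, 0 < δ ∧ ∀ ε : ℝ, 0 < ε → ε ≤ δ → (E : EReal) ≤ gaussNorm p φ b ε w := by
  obtain ⟨ε₀, hε₀, hne⟩ := hover
  have hp : (0 : ℝ) < (p : ℝ) := by
    exact_mod_cast (Fact.out : p.Prime).pos
  -- pick a real lower bound c₀ for the ε₀-Gauss norm, with c₀ < E and c₀ < 1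
  obtain ⟨r, hr⟩ : ∃ r : ℝ, (r : EReal) ≤ gaussNorm p φ b ε₀ w := by
    rcases eq_or_ne (gaussNorm p φ b ε₀ w) ⊤ with h | h
    · exact ⟨0, h ▸ le_top⟩
    · lift gaussNorm p φ b ε₀ w to ℝ using ⟨h, hne⟩ with x hx
      exact ⟨x, le_refl _⟩
  set c₀ : ℝ := min r (E - 1) with hc₀def
  have hc₀r : c₀ ≤ r := min_le_left _ _
  have hc₀E : c₀ < E := lt_of_le_of_lt (min_le_right _ _) (by linarith)
  have hc₀1 : c₀ < 1 := lt_trans hc₀E hE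
  have hc₀ : (c₀ : EReal) ≤ gaussNorm p φ b ε₀ w :=
    le_trans (by exact_mod_cast hc₀r) hr
  have hterm : ∀ u : ℕ, (c₀ : EReal) ≤ ((u : EReal) +
      ((ε₀ * ((p : ℝ)⁻¹) ^ u : ℝ) : EReal) * weightedValQuot φ b (w.coeff u)) :=
    fun u => le_trans hc₀ (iInf_le _ u)
  have h1E : (0:ℝ) < 1 - E := by linarith
  have h1c : (0:ℝ) < 1 - c₀ := by linarith
  refine ⟨ε₀ * (1 - E) / (1 - c₀), by positivity, fun ε hε hεδ => le_iInf fun u => ?_⟩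
  have hq : (0 : ℝ) < ((p : ℝ)⁻¹) ^ u := by positivity
  rcases Nat.eq_zero_or_pos u with hu | hu
  · subst hu
    rw [hw0, weightedValQuot_zero, EReal.coe_mul_top_of_pos (by positivity),
      Nat.cast_zero, zero_add]
    exact le_top
  · -- u ≥ 1
    have hu1 : (1 : ℝ) ≤ (u : ℝ) := by exact_mod_cast hu
    rcases eq_or_ne (weightedValQuot φ b (w.coeff u)) ⊤ with htop | htop
    · rw [htop, EReal.coe_mul_top_of_pos (by positivity)]
      rw [EReal.add_top_of_ne_bot (by exact_mod_cast EReal.natCast_ne_bot u)]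
      exact le_top
    · lift weightedValQuot φ b (w.coeff u) to ℝ using
        ⟨htop, weightedValQuot_ne_bot φ hφ b _⟩ with x hx
      have hterm' := hterm u
      rw [← hx] at hterm'
      rw [show ((u : ℕ) : EReal) = ((u : ℝ) : EReal) by norm_cast,
        ← EReal.coe_mul, ← EReal.coe_add, EReal.coe_le_coe_iff] at hterm' ⊢
      -- real arithmetic
      rcases le_or_gt 0 x with hx0 | hx0
      · nlinarith [mul_nonneg (mul_nonneg hε.le hq.le) hx0]
      · have key : c₀ - (u : ℝ) ≤ ε₀ * ((p : ℝ)⁻¹) ^ u * x := by linarith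
        set t : ℝ := (1 - E) / (1 - c₀) with htdef
        have ht0 : 0 ≤ t := by positivity
        have ht : t * (1 - c₀) = 1 - E := div_mul_cancel₀ _ (by linarith)
        have ht1 : t ≤ 1 := by
          rw [htdef, div_le_one (by linarith)]; linarith
        have hqx : ((p : ℝ)⁻¹) ^ u * x ≤ 0 := by nlinarith
        have hδx : (ε₀ * (1 - E) / (1 - c₀)) * (((p : ℝ)⁻¹) ^ u * x) ≤
            ε * (((p : ℝ)⁻¹) ^ u * x) :=
          mul_le_mul_of_nonpos_right hεδ hqx
        have h2 : t * (c₀ - (u : ℝ)) ≤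
            (ε₀ * (1 - E) / (1 - c₀)) * (((p : ℝ)⁻¹) ^ u * x) := by
          calc t * (c₀ - (u : ℝ)) ≤ t * (ε₀ * ((p : ℝ)⁻¹) ^ u * x) :=
                mul_le_mul_of_nonneg_left key ht0
            _ = (ε₀ * (1 - E) / (1 - c₀)) * (((p : ℝ)⁻¹) ^ u * x) := by
                rw [htdef]; ring
        have h3 : E ≤ (u : ℝ) + t * (c₀ - (u : ℝ)) := by
          nlinarith [mul_nonneg (by linarith : (0:ℝ) ≤ (u:ℝ) - 1) (by linarith : (0:ℝ) ≤ 1 - t)]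
        nlinarith [h3, h2, hδx]
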